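/- For every n ≥ 1 and every k = (k_1,…,k_n) ∈ ℤ^n, the signed Gelfand–Tsetlin count satisfies sgt(k) = ∏_{1 ≤ i < j ≤ n} (k_j − k_i + j − i)/(j − i), where the equality holds in ℚ (in particular the product on the right-hand side is an integer for all integer tuples k). -/

import Mathlib

/-- The signed sum `Σ'_{l=a..b} f(l)`: the ordinary sum over `[a,b]` when `a ≤ b`,
and `-Σ_{l=b+1}^{a-1} f(l)` when `a > b`. -/
noncomputable def ssum (a b : ℤ) (f : ℤ → ℤ) : ℤ :=
  if a ≤ b then ∑ l ∈ Finset.Icc a b, f l else -∑ l ∈ Finset.Icc (b + 1) (a - 1), f l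

/-- Iterated signed sum over the box `[a 0, b 0] × ⋯ × [a (m-1), b (m-1)]`,
one signed sum per coordinate. -/
noncomputable def sbox : (m : ℕ) → (Fin m → ℤ) → (Fin m → ℤ) → ((Fin m → ℤ) → ℤ) → ℤ
  | 0, _, _, f => f Fin.elim0
  | m + 1, a, b, f =>
      ssum (a 0) (b 0) fun l =>
        sbox m (fun i => a i.succ) (fun i => b i.succ) fun t => f (Fin.cons l t)

/-- The signed Gelfand–Tsetlin count: `sgt k = 1` for tuples of length `≤ 1`, and
`sgt (k_1,…,k_n) = Σ'_{l_1=k_1..k_2} ⋯ Σ'_{l_{n-1}=k_{n-1}..k_n} sgt (l_1,…,l_{n-1})`. -/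
noncomputable def sgt : (n : ℕ) → (Fin n → ℤ) → ℤ
  | 0, _ => 1
  | 1, _ => 1
  | n + 2, k => sbox (n + 1) (fun i => k i.castSucc) (fun i => k i.succ) (sgt (n + 1))


open Finset

/-- ℚ-valued signed sum. -/
noncomputable def qsum (a b : ℤ) (f : ℤ → ℚ) : ℚ :=
  if a ≤ b then ∑ l ∈ Finset.Icc a b, f l else -∑ l ∈ Finset.Icc (b + 1) (a - 1), f l

/-- ℚ-valued iterated signed sum. -/
noncomputable def qbox : (m : ℕ) → (Fin m → ℤ) → (Fin m → ℤ) → ((Fin m → ℤ) → ℚ) → ℚ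
  | 0, _, _, f => f Fin.elim0
  | m + 1, a, b, f =>
      qsum (a 0) (b 0) fun l =>
        qbox m (fun i => a i.succ) (fun i => b i.succ) fun t => f (Fin.cons l t)

lemma qsum_congr (a b : ℤ) {f g : ℤ → ℚ} (h : ∀ l, f l = g l) :
    qsum a b f = qsum a b g := by
  have : f = g := funext h
  rw [this]

lemma qbox_congr (m : ℕ) (a b : Fin m → ℤ) {f g : (Fin m → ℤ) → ℚ}
    (h : ∀ t, f t = g t) : qbox m a b f = qbox m a b g := by
  have : f = g := funext h
  rw [this]

lemma ssum_cast (a b : ℤ) (f : ℤ → ℤ) :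
    ((ssum a b f : ℤ) : ℚ) = qsum a b (fun l => (f l : ℚ)) := by
  unfold ssum qsum
  split <;> push_cast <;> ring

lemma qsum_const_mul (a b : ℤ) (c : ℚ) (f : ℤ → ℚ) :
    qsum a b (fun l => c * f l) = c * qsum a b f := by
  unfold qsum
  split <;> simp [Finset.mul_sum]

lemma qsum_mul_const (a b : ℤ) (c : ℚ) (f : ℤ → ℚ) :
    qsum a b (fun l => f l * c) = qsum a b f * c := by
  unfold qsum
  split <;> simp [Finset.sum_mul]

lemma qsum_sum {ι : Type*} (S : Finset ι) (a b : ℤ) (F : ι → ℤ → ℚ) :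
    qsum a b (fun l => ∑ s ∈ S, F s l) = ∑ s ∈ S, qsum a b (F s) := by
  unfold qsum
  split
  · exact Finset.sum_comm
  · rw [Finset.sum_comm]
    simp

lemma qbox_const_mul (m : ℕ) (a b : Fin m → ℤ) (c : ℚ) (f : (Fin m → ℤ) → ℚ) :
    qbox m a b (fun t => c * f t) = c * qbox m a b f := by
  induction m with
  | zero => rfl
  | succ m ih =>
      show qsum _ _ _ = c * qsum _ _ _
      rw [← qsum_const_mul]
      exact qsum_congr _ _ fun l => ih _ _ _

lemma qbox_sum {ι : Type*} (S : Finset ι) (m : ℕ) (a b : Fin m → ℤ)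
    (F : ι → (Fin m → ℤ) → ℚ) :
    qbox m a b (fun t => ∑ s ∈ S, F s t) = ∑ s ∈ S, qbox m a b (F s) := by
  induction m with
  | zero =>
      show (∑ s ∈ S, F s Fin.elim0) = _
      rfl
  | succ m ih =>
      show qsum _ _ _ = _
      rw [show (∑ s ∈ S, qbox (m+1) a b (F s)) = ∑ s ∈ S, qsum (a 0) (b 0)
        (fun l => qbox m (fun i => a i.succ) (fun i => b i.succ)
          fun t => F s (Fin.cons l t)) from rfl, ← qsum_sum]
      exact qsum_congr _ _ fun l => ih _ _ _

lemma sbox_cast (m : ℕ) (a b : Fin m → ℤ) (f : (Fin m → ℤ) → ℤ) :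
    ((sbox m a b f : ℤ) : ℚ) = qbox m a b (fun t => (f t : ℚ)) := by
  induction m with
  | zero => rfl
  | succ m ih =>
      show ((ssum _ _ _ : ℤ) : ℚ) = qsum _ _ _
      rw [ssum_cast]
      exact qsum_congr _ _ fun l => ih _ _ _

/-- product over coordinates -/
lemma qbox_prod (m : ℕ) (a b : Fin m → ℤ) (g : Fin m → ℤ → ℚ) :
    qbox m a b (fun t => ∏ i, g i (t i)) = ∏ i, qsum (a i) (b i) (g i) := by
  induction m with
  | zero => simp [qbox]
  | succ m ih =>
      show qsum _ _ _ = _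
      rw [Fin.prod_univ_succ]
      rw [← qsum_mul_const]
      refine qsum_congr _ _ fun l => ?_
      have : (fun t : Fin m → ℤ => ∏ i : Fin (m+1), g i ((Fin.cons l t : Fin (m+1) → ℤ) i))
          = fun t => g 0 l * ∏ i : Fin m, g i.succ (t i) := by
        funext t
        rw [Fin.prod_univ_succ]
        simp
      rw [qbox_congr m _ _ (fun t => congrFun this t), qbox_const_mul, ih]

/-- telescoping sum over Icc -/
lemma sum_Icc_telescope (f H : ℤ → ℚ) (hH : ∀ t, H (t + 1) - H t = f t)
    (a b : ℤ) (hab : a - 1 ≤ b) : ∑ l ∈ Finset.Icc a b, f l = H (b + 1) - H a := by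
  refine Int.le_induction (m := a - 1)
      (motive := fun b _ => ∑ l ∈ Finset.Icc a b, f l = H (b + 1) - H a) ?_ ?_ b hab
  · have : Finset.Icc a (a - 1) = ∅ := by
      apply Finset.Icc_eq_empty; omega
    simp [this, show a - 1 + 1 = a by ring]
  · intro b hb ih
    have h1 : Finset.Icc a (b + 1) = insert (b + 1) (Finset.Icc a b) := by
      ext x; simp; omega
    have h2 : (b + 1) ∉ Finset.Icc a b := by simp
    rw [h1, Finset.sum_insert h2, ih]
    have := hH (b + 1)
    linarith

/-- key telescoping property of the signed sum -/
lemma qsum_eq_tele (a b : ℤ) (f H : ℤ → ℚ) (hH : ∀ t, H (t + 1) - H t = f t) :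
    qsum a b f = H (b + 1) - H a := by
  unfold qsum
  split
  next h => exact sum_Icc_telescope f H hH a b (by omega)
  next h =>
      rw [sum_Icc_telescope f H hH (b + 1) (a - 1) (by omega)]
      rw [show a - 1 + 1 = a by ring]
      ring


/-! ### descPochhammer evaluation -/

noncomputable def dp (m : ℕ) (y : ℚ) : ℚ := (descPochhammer ℚ m).eval y

lemma dp_zero (y : ℚ) : dp 0 y = 1 := by
  simp [dp, descPochhammer]

lemma dp_step (m : ℕ) (y : ℚ) :
    dp (m + 1) (y + 1) - dp (m + 1) y = ((m : ℚ) + 1) * dp m y := by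
  have h1 : dp (m + 1) (y + 1) = (y + 1) * dp m y := by
    unfold dp
    rw [descPochhammer_succ_left]
    simp [Polynomial.eval_comp]
  have h2 : dp (m + 1) y = dp m y * (y - m) := descPochhammer_succ_eval m y
  rw [h1, h2]; ring

/-- The Vandermonde product equals the determinant in the descPochhammer basis. -/
lemma vand_eq_det_dp (m : ℕ) (y : Fin m → ℚ) :
    (∏ i : Fin m, ∏ j ∈ Finset.Ioi i, (y j - y i)) =
      (Matrix.of fun i j : Fin m => dp j (y i)).det := by
  rw [← Matrix.det_vandermonde]
  exact Matrix.det_eval_matrixOfPolynomials_eq_det_vandermonde y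
    (fun j => descPochhammer ℚ j)
    (fun j => descPochhammer_natDegree ℚ j) (fun j => monic_descPochhammer ℚ j)

/-- Row-difference trick for determinants. -/
lemma det_diff (n : ℕ) (G : Fin (n + 2) → Fin (n + 2) → ℚ) (hG : ∀ i, G i 0 = 1) :
    (Matrix.of fun i j : Fin (n + 1) => G i.succ j.succ - G i.castSucc j.succ).det
      = (Matrix.of G).det := by
  classical
  set L : Matrix (Fin (n + 2)) (Fin (n + 2)) ℚ :=
    Matrix.of (fun i j : Fin (n + 2) => if j = i then 1 else if i.1 = j.1 + 1 then -1 else 0)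
    with hL
  have htri : L.BlockTriangular OrderDual.toDual := by
    intro i j hij
    have hij' : i < j := hij
    have hv : i.1 < j.1 := hij'
    simp only [hL, Matrix.of_apply]
    rw [if_neg hij'.ne', if_neg (by omega)]
  have hLdet : L.det = 1 := by
    rw [Matrix.det_of_lowerTriangular L htri]
    simp [hL]
  have row0 : ∀ (N : Matrix (Fin (n+2)) (Fin (n+2)) ℚ) j, (L * N) 0 j = N 0 j := by
    intro N j
    rw [Matrix.mul_apply]
    have key : ∀ m : Fin (n+2), L 0 m * N m j = if m = 0 then N m j else 0 := by
      intro m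
      by_cases h : m = 0
      · subst h; simp [hL]
      · have h2 : ¬ ((0:Fin (n+2)).1 = m.1 + 1) := by simp
        have h3 : m ≠ 0 := h
        simp only [hL, Matrix.of_apply]
        rw [if_neg h3, if_neg h2, if_neg h3, zero_mul]
    rw [Finset.sum_congr rfl (fun m _ => key m)]
    simp
  have rowS : ∀ (N : Matrix (Fin (n+2)) (Fin (n+2)) ℚ) (i : Fin (n+1)) j,
      (L * N) i.succ j = N i.succ j - N i.castSucc j := by
    intro N i j
    rw [Matrix.mul_apply]
    have hsc : i.succ ≠ i.castSucc := (Fin.castSucc_lt_succ (i := i)).ne'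
    have key : ∀ m : Fin (n+2), L i.succ m * N m j =
        (if m = i.succ then N m j else 0) + (if m = i.castSucc then -(N m j) else 0) := by
      intro m
      simp only [hL, Matrix.of_apply]
      rcases eq_or_ne m i.succ with h1 | h1
      · subst h1
        rw [if_pos rfl, if_pos rfl, if_neg hsc, one_mul, add_zero]
      · rcases eq_or_ne m i.castSucc with h2 | h2
        · subst h2
          have hval : (i.succ).1 = (i.castSucc).1 + 1 := by simp
          rw [if_neg h1, if_pos hval, if_neg h1, if_pos rfl, zero_add]
          ring
        · have hm : m.1 ≠ i.1 := by
            intro h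
            exact h2 (Fin.ext (by simpa using h))
          have hval : ¬ ((i.succ).1 = m.1 + 1) := by
            simp only [Fin.val_succ]
            omega
          rw [if_neg h1, if_neg hval, if_neg h1, if_neg h2, zero_mul, add_zero]
    rw [Finset.sum_congr rfl (fun m _ => key m), Finset.sum_add_distrib]
    rw [Finset.sum_ite_eq' Finset.univ i.succ (fun m => N m j)]
    rw [Finset.sum_ite_eq' Finset.univ i.castSucc (fun m => -(N m j))]
    simp [sub_eq_add_neg]
  have hmaineq : (L * Matrix.of G).det = (Matrix.of G).det := by
    rw [Matrix.det_mul, hLdet, one_mul]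
  rw [← hmaineq, Matrix.det_succ_column_zero (L * Matrix.of G), Fin.sum_univ_succ]
  have hzero : ∀ i : Fin (n+1),
      (-1 : ℚ) ^ ((i.succ : Fin (n+2)) : ℕ) * (L * Matrix.of G) i.succ 0 *
        (((L * Matrix.of G).submatrix (Fin.succAbove i.succ) Fin.succ)).det = 0 := by
    intro i
    rw [rowS]
    simp only [Matrix.of_apply, hG]
    ring
  rw [Finset.sum_congr rfl (fun i _ => hzero i), Finset.sum_const_zero, add_zero]
  rw [row0]
  simp only [Matrix.of_apply, hG, Fin.val_zero, pow_zero, one_mul, mul_one]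
  rw [Fin.succAbove_zero]
  congr 1
  ext i j
  rw [Matrix.submatrix_apply, rowS]
  simp


lemma qsum_dp (s : ℕ) (c d : ℤ) (i : ℕ) :
    qsum c d (fun l => dp s ((l : ℚ) + i)) =
      (dp (s + 1) ((d : ℚ) + 1 + i) - dp (s + 1) ((c : ℚ) + i)) / ((s : ℚ) + 1) := by
  have hs : ((s : ℚ) + 1) ≠ 0 := by positivity
  have htele : ∀ t : ℤ, dp (s+1) (((t + 1 : ℤ) : ℚ) + i) / ((s:ℚ)+1)
      - dp (s+1) ((t : ℚ) + i) / ((s:ℚ)+1) = dp s ((t : ℚ) + i) := by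
    intro t
    have harg : (((t + 1 : ℤ)) : ℚ) + i = ((t : ℚ) + i) + 1 := by push_cast; ring
    rw [harg, div_sub_div_same, dp_step, mul_div_cancel_left₀ _ hs]
  have h := qsum_eq_tele c d (fun l => dp s ((l : ℚ) + i))
      (fun l => dp (s+1) ((l : ℚ) + i) / ((s:ℚ)+1)) htele
  have harg : (((d + 1 : ℤ)) : ℚ) + i = (d : ℚ) + 1 + i := by push_cast; ring
  rw [h, harg, div_sub_div_same]

lemma prod_fin_add_one (m : ℕ) : ∏ i : Fin m, ((i.1 : ℚ) + 1) = (Nat.factorial m : ℚ) := by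
  induction m with
  | zero => simp
  | succ m ih =>
      rw [Fin.prod_univ_castSucc]
      simp only [Fin.coe_castSucc, Fin.val_last, ih, Nat.factorial_succ]
      push_cast
      ring

/-- abbreviation for the RHS product -/
def Dq (m : ℕ) (k : Fin m → ℤ) : ℚ :=
  ∏ i : Fin m, ∏ j ∈ Finset.Ioi i,
    (((k j : ℚ) - (k i : ℚ) + (j.1 : ℚ) - (i.1 : ℚ)) / ((j.1 : ℚ) - (i.1 : ℚ)))

lemma Dq_eq (m : ℕ) (k : Fin m → ℤ) :
    Dq m k =
      (∏ i : Fin m, ∏ j ∈ Finset.Ioi i,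
        (((k j : ℚ) + (j.1 : ℚ)) - ((k i : ℚ) + (i.1 : ℚ))))
      / (∏ i : Fin m, ∏ j ∈ Finset.Ioi i, ((j.1 : ℚ) - (i.1 : ℚ))) := by
  unfold Dq
  rw [← Finset.prod_div_distrib]
  refine Finset.prod_congr rfl fun i _ => ?_
  rw [← Finset.prod_div_distrib]
  refine Finset.prod_congr rfl fun j _ => ?_
  congr 1
  ring

lemma vand_iota (m : ℕ) :
    (∏ i : Fin (m + 1), ∏ j ∈ Finset.Ioi i, ((j.1 : ℚ) - (i.1 : ℚ)))
      = (Nat.superFactorial m : ℚ) := by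
  have h := Matrix.det_vandermonde_id_eq_superFactorial (R := ℚ) m
  rw [Matrix.det_vandermonde] at h
  exact h

lemma det_dp_expand (m : ℕ) (y : Fin m → ℚ) :
    (∏ i : Fin m, ∏ j ∈ Finset.Ioi i, (y j - y i)) =
      ∑ σ : Equiv.Perm (Fin m), ((Equiv.Perm.sign σ : ℤ) : ℚ) *
        ∏ i, dp (σ i) (y i) := by
  rw [vand_eq_det_dp m y, ← Matrix.det_transpose, Matrix.det_apply']
  refine Finset.sum_congr rfl fun σ _ => ?_
  congr 1

lemma sum_perm_eq_det (m : ℕ) (F : Fin m → Fin m → ℚ) :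
    ∑ σ : Equiv.Perm (Fin m), ((Equiv.Perm.sign σ : ℤ) : ℚ) * ∏ i, F i (σ i)
      = (Matrix.of fun i j : Fin m => F j i).det := by
  rw [Matrix.det_apply']
  rfl

/-- The key branching identity. -/
lemma key_branch (n : ℕ) (k : Fin (n + 2) → ℤ) :
    qbox (n + 1) (fun i => k i.castSucc) (fun i => k i.succ) (Dq (n + 1)) = Dq (n + 2) k := by
  classical
  set x : Fin (n + 2) → ℚ := fun i => (k i : ℚ) + (i.1 : ℚ) with hx
  have step1 : ∀ t : Fin (n + 1) → ℤ, Dq (n + 1) t =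
      (1 / (Nat.superFactorial n : ℚ)) *
      ∑ σ : Equiv.Perm (Fin (n + 1)), ((Equiv.Perm.sign σ : ℤ) : ℚ) *
        ∏ i : Fin (n + 1), dp (σ i) ((t i : ℚ) + (i.1 : ℚ)) := by
    intro t
    rw [Dq_eq, vand_iota, det_dp_expand (n + 1) (fun i => (t i : ℚ) + (i.1 : ℚ))]
    ring
  rw [qbox_congr _ _ _ step1, qbox_const_mul, qbox_sum]
  have step2 : ∀ σ : Equiv.Perm (Fin (n + 1)),
      qbox (n + 1) (fun i => k i.castSucc) (fun i => k i.succ)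
        (fun t => ((Equiv.Perm.sign σ : ℤ) : ℚ) *
          ∏ i : Fin (n + 1), dp (σ i) ((t i : ℚ) + (i.1 : ℚ)))
      = (1 / (Nat.factorial (n + 1) : ℚ)) * (((Equiv.Perm.sign σ : ℤ) : ℚ) *
          ∏ i : Fin (n + 1),
            (dp ((σ i).1 + 1) (x i.succ) - dp ((σ i).1 + 1) (x i.castSucc))) := by
    intro σ
    rw [qbox_const_mul, qbox_prod (n + 1) _ _ (fun i l => dp (σ i) ((l : ℚ) + (i.1 : ℚ)))]
    have hfac : ∀ i : Fin (n + 1),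
        qsum (k i.castSucc) (k i.succ) (fun l => dp (σ i) ((l : ℚ) + (i.1 : ℚ)))
        = (dp ((σ i).1 + 1) (x i.succ) - dp ((σ i).1 + 1) (x i.castSucc))
            / (((σ i).1 : ℚ) + 1) := by
      intro i
      rw [qsum_dp ((σ i).1) (k i.castSucc) (k i.succ) i.1]
      have e1 : (k i.succ : ℚ) + 1 + (i.1 : ℚ) = x i.succ := by
        rw [hx]; simp [Fin.val_succ]; push_cast; ring
      have e2 : (k i.castSucc : ℚ) + (i.1 : ℚ) = x i.castSucc := by
        rw [hx]; simp [Fin.coe_castSucc]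
      rw [e1, e2]
    rw [Finset.prod_congr rfl (fun i _ => hfac i), Finset.prod_div_distrib]
    have hden : (∏ i : Fin (n + 1), (((σ i).1 : ℚ) + 1)) = (Nat.factorial (n + 1) : ℚ) := by
      rw [Equiv.prod_comp σ (fun j : Fin (n + 1) => ((j.1 : ℚ) + 1))]
      exact prod_fin_add_one (n + 1)
    rw [hden]
    ring
  rw [Finset.sum_congr rfl (fun σ _ => step2 σ), ← Finset.mul_sum]
  rw [sum_perm_eq_det (n + 1)
    (fun i s => dp (s.1 + 1) (x i.succ) - dp (s.1 + 1) (x i.castSucc))]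
  have hdet : (Matrix.of fun i j : Fin (n + 1) =>
      dp (j.1 + 1) (x i.succ) - dp (j.1 + 1) (x i.castSucc)).det
      = (∏ i : Fin (n + 2), ∏ j ∈ Finset.Ioi i, (x j - x i)) := by
    have h1 : (Matrix.of fun i j : Fin (n + 1) =>
        dp (j.1 + 1) (x i.succ) - dp (j.1 + 1) (x i.castSucc))
        = Matrix.of fun i j : Fin (n + 1) =>
          (fun a b : Fin (n + 2) => dp b.1 (x a)) i.succ j.succ
          - (fun a b : Fin (n + 2) => dp b.1 (x a)) i.castSucc j.succ := by
      ext i j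
      simp [Fin.val_succ]
    rw [h1, det_diff n (fun a b => dp b.1 (x a)) (fun a => by simp [dp_zero])]
    rw [vand_eq_det_dp (n + 2) x]
  have hdet' : (Matrix.of fun i j : Fin (n + 1) =>
      (fun a s : Fin (n + 1) => dp (s.1 + 1) (x a.succ) - dp (s.1 + 1) (x a.castSucc)) j i).det
      = (∏ i : Fin (n + 2), ∏ j ∈ Finset.Ioi i, (x j - x i)) := by
    rw [← hdet, ← Matrix.det_transpose]
    rfl
  rw [hdet']
  have hDq2 : Dq (n + 2) k =
      (∏ i : Fin (n + 2), ∏ j ∈ Finset.Ioi i, (x j - x i))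
        / (Nat.superFactorial (n + 1) : ℚ) := by
    rw [Dq_eq, vand_iota]
  rw [hDq2, Nat.superFactorial_succ]
  push_cast
  rw [div_eq_mul_inv (∏ i : Fin (n + 2), ∏ j ∈ Finset.Ioi i, (x j - x i)), mul_inv]
  ring

/-- For every `n ≥ 1` and `k ∈ ℤ^n`, the signed Gelfand–Tsetlin count satisfies
`sgt k = ∏_{1 ≤ i < j ≤ n} (k_j - k_i + j - i)/(j - i)` as rational numbers. -/
theorem sgt_product_formula (n : ℕ) (k : Fin (n + 1) → ℤ) :
    (sgt (n + 1) k : ℚ) =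
      ∏ i : Fin (n + 1), ∏ j ∈ Finset.Ioi i,
        (((k j : ℚ) - (k i : ℚ) + (j.1 : ℚ) - (i.1 : ℚ)) / ((j.1 : ℚ) - (i.1 : ℚ))) := by
  show (sgt (n + 1) k : ℚ) = Dq (n + 1) k
  induction n with
  | zero =>
      rw [show sgt 1 k = 1 from rfl]
      simp [Dq]
  | succ n ih =>
      rw [show sgt (n + 2) k
          = sbox (n + 1) (fun i => k i.castSucc) (fun i => k i.succ) (sgt (n + 1)) from rfl,
        sbox_cast, qbox_congr _ _ _ (fun t => ih t), key_branch]
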